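/- arXiv:1011.2585 — 2 statements merged into one kernel-verified Lean document; each statement's English description precedes it below -/
import Mathlib

section
/- Let h : H → K be an isomorphism between subgroups K ⊆ H of a group G such that there is z in the centralizer of K in H with z² ∉ K. Let F ⊆ P(G) be an h-invariant left-invariant ideal. If A ⊆ H belongs to τ^α(F) for some ordinal α, then h(A) ∪ z·h(A) belongs to τ^{α+1}(F). -/
open Pointwise

/-- A family of subsets of `G` is left-invariant if it is closed under left translations. -/
def LeftInvariant {G : Type} [Group G] (F : Set (Set G)) : Prop :=
  ∀ A ∈ F, ∀ x : G, x • A ∈ F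

/-- A family of subsets is lower if it is closed under taking subsets. -/
def Lower {G : Type} [Group G] (F : Set (Set G)) : Prop :=
  ∀ A B : Set G, A ⊆ B → B ∈ F → A ∈ F

/-- The transfinite iterates `τ^α(F)`. -/
noncomputable def tauIter {G : Type} [Group G] (F : Set (Set G)) : Ordinal → Set (Set G) :=
  Ordinal.lt_wf.fix fun α ih =>
    if α = 0 then F
    else {A | ∀ x y : G, x ≠ y → ∃ β, ∃ h : β < α, x • A ∩ y • A ∈ ih β h}

/-- The image `h(A) ⊆ G` of a set `A ⊆ H` under an isomorphism `h : H → K`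
between subgroups of `G`. -/
def hImg {G : Type} [Group G] {H K : Subgroup G} (e : H ≃* K) (A : Set G) : Set G :=
  Subtype.val '' (⇑e '' (Subtype.val ⁻¹' A))

/-- `F` is `h`-invariant: for `A ⊆ H`, `A ∈ F` iff `h(A) ∈ F`. -/
def HInv {G : Type} [Group G] {H K : Subgroup G} (e : H ≃* K) (F : Set (Set G)) : Prop :=
  ∀ A : Set G, A ⊆ (H : Set G) → (A ∈ F ↔ hImg e A ∈ F)

theorem tauIter_eq {G : Type} [Group G] (F : Set (Set G)) (α : Ordinal) :
    tauIter F α = if α = 0 then F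
      else {A | ∀ x y : G, x ≠ y → ∃ β, ∃ _ : β < α, x • A ∩ y • A ∈ tauIter F β} := by
  conv_lhs => rw [tauIter]
  rw [Ordinal.lt_wf.fix_eq]
  rfl

theorem tauIter_zero {G : Type} [Group G] (F : Set (Set G)) : tauIter F 0 = F := by
  rw [tauIter_eq]; simp

theorem mem_tauIter_pos {G : Type} [Group G] {F : Set (Set G)} {α : Ordinal} (hα : α ≠ 0)
    {A : Set G} : A ∈ tauIter F α ↔
      ∀ x y : G, x ≠ y → ∃ β, ∃ _ : β < α, x • A ∩ y • A ∈ tauIter F β := by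
  rw [tauIter_eq, if_neg hα]; rfl

theorem tauIter_smul {G : Type} [Group G] {F : Set (Set G)} (hli : LeftInvariant F)
    {α : Ordinal} {A : Set G} (hA : A ∈ tauIter F α) (g : G) : g • A ∈ tauIter F α := by
  rcases eq_or_ne α 0 with rfl | hα
  · rw [tauIter_zero] at hA ⊢; exact hli A hA g
  · rw [mem_tauIter_pos hα] at hA ⊢
    intro x y hxy
    obtain ⟨β, hβ, h⟩ := hA (x * g) (y * g) (fun hc => hxy (mul_right_cancel hc))
    exact ⟨β, hβ, by rwa [smul_smul, smul_smul]⟩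

theorem tauIter_lower {G : Type} [Group G] {F : Set (Set G)} (hlo : Lower F) (α : Ordinal) :
    ∀ {A B : Set G}, A ⊆ B → B ∈ tauIter F α → A ∈ tauIter F α := by
  induction α using Ordinal.induction with
  | _ α IH =>
    intro A B hAB hB
    rcases eq_or_ne α 0 with rfl | hα
    · rw [tauIter_zero] at hB ⊢; exact hlo A B hAB hB
    · rw [mem_tauIter_pos hα] at hB ⊢
      intro x y hxy
      obtain ⟨β, hβ, h⟩ := hB x y hxy
      exact ⟨β, hβ, IH β hβ
        (Set.inter_subset_inter (Set.smul_set_mono hAB) (Set.smul_set_mono hAB)) h⟩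

section
variable {G : Type} [Group G] {H K : Subgroup G} (e : H ≃* K)

theorem hImg_subset (A : Set G) : hImg e A ⊆ (K : Set G) := by
  rintro g ⟨k, _, rfl⟩; exact k.2

theorem mem_hImg {A : Set G} {g : G} :
    g ∈ hImg e A ↔ ∃ a : H, (a : G) ∈ A ∧ ((e a : K) : G) = g := by
  constructor
  · rintro ⟨k, ⟨a, ha, rfl⟩, rfl⟩; exact ⟨a, ha, rfl⟩
  · rintro ⟨a, ha, rfl⟩; exact ⟨e a, ⟨a, ha, rfl⟩, rfl⟩

theorem hImg_inter {A B : Set G} : hImg e (A ∩ B) = hImg e A ∩ hImg e B := by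
  unfold hImg
  rw [Set.preimage_inter, Set.image_inter e.injective, Set.image_inter Subtype.val_injective]

theorem hImg_smul {A : Set G} (hA : A ⊆ (H : Set G)) (c : H) :
    hImg e ((c : G) • A) = ((e c : K) : G) • hImg e A := by
  ext g
  rw [mem_hImg]
  constructor
  · rintro ⟨a, ha, rfl⟩
    obtain ⟨b, hb, hcb⟩ := ha
    have hbH : b ∈ H := hA hb
    have ha' : a = c * ⟨b, hbH⟩ := Subtype.ext (by simpa [eq_comm] using hcb)
    refine ⟨((e ⟨b, hbH⟩ : K) : G), (mem_hImg e).2 ⟨⟨b, hbH⟩, hb, rfl⟩, ?_⟩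
    rw [ha', map_mul]
    push_cast
    rw [smul_eq_mul]
  · rintro ⟨_, hg, rfl⟩
    obtain ⟨b, hb, rfl⟩ := (mem_hImg e).1 hg
    refine ⟨c * b, ?_, ?_⟩
    · push_cast
      exact Set.smul_mem_smul_set hb
    · rw [map_mul]; push_cast; rw [smul_eq_mul]

theorem smul_inter_eq_empty {T : Set G} (hT : T ⊆ (K : Set G)) {s t : G}
    (h : s⁻¹ * t ∉ K) : s • T ∩ t • T = ∅ := by
  ext g
  simp only [Set.mem_inter_iff, Set.mem_empty_iff_false, iff_false, not_and]
  rintro ⟨a, ha, rfl⟩ ⟨b, hb, hba⟩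
  apply h
  have hst : s⁻¹ * t = a * b⁻¹ := by
    have h1 : t * b = s * a := by simpa [smul_eq_mul] using hba
    have ht : t = s * a * b⁻¹ := eq_mul_inv_iff_mul_eq.mpr h1
    rw [ht]; group
  rw [hst]
  exact K.mul_mem (hT ha) (K.inv_mem (hT hb))

theorem smul_inter_smul (T : Set G) (s t : G) :
    s • T ∩ t • T = s • (T ∩ (s⁻¹ * t) • T) := by
  rw [Set.smul_set_inter, smul_smul, mul_inv_cancel_left]

end

section
variable {G : Type} [Group G] {H K : Subgroup G} (e : H ≃* K)

theorem tauIter_hImg {F : Set (Set G)} (hli : LeftInvariant F) (hlo : Lower F)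
    (hinv : HInv e F) (hF0 : ∅ ∈ F) (α : Ordinal) :
    ∀ {A : Set G}, A ⊆ (H : Set G) → A ∈ tauIter F α → hImg e A ∈ tauIter F α := by
  induction α using Ordinal.induction with
  | _ α IH =>
  intro A hAH hA
  rcases eq_or_ne α 0 with rfl | hα
  · rw [tauIter_zero] at hA ⊢; exact (hinv A hAH).1 hA
  · rw [mem_tauIter_pos hα] at hA ⊢
    intro x y hxy
    by_cases hk : x⁻¹ * y ∈ K
    · have hk1 : x⁻¹ * y ≠ 1 := fun h => hxy (inv_mul_eq_one.mp h)
      set c : H := e.symm ⟨x⁻¹ * y, hk⟩ with hc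
      have hec : ((e c : K) : G) = x⁻¹ * y := by rw [hc, e.apply_symm_apply]
      have hc1 : (c : G) ≠ 1 := by
        intro h
        have h0 : c = 1 := by exact_mod_cast h
        have h3 : (⟨x⁻¹ * y, hk⟩ : K) = 1 := by
          rw [← e.apply_symm_apply ⟨x⁻¹ * y, hk⟩, ← hc, h0, map_one]
        apply hk1
        simpa using congrArg Subtype.val h3
      obtain ⟨β, hβ, hS⟩ := hA ((c : G)⁻¹) 1 (inv_ne_one.mpr hc1)
      have hS' : A ∩ (c : G) • A ∈ tauIter F β := by
        simpa [Set.smul_set_inter, smul_smul] using tauIter_smul hli hS (c : G)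
      have hsub : A ∩ (c : G) • A ⊆ (H : Set G) := fun g hg => hAH hg.1
      refine ⟨β, hβ, ?_⟩
      have key : x • hImg e A ∩ y • hImg e A = x • hImg e (A ∩ (c : G) • A) := by
        rw [hImg_inter, hImg_smul e hAH c, hec, smul_inter_smul]
      rw [key]
      exact tauIter_smul hli (IH β hβ hsub hS') x
    · refine ⟨0, pos_iff_ne_zero.mpr hα, ?_⟩
      rw [tauIter_zero, smul_inter_eq_empty (hImg_subset e A) hk]
      exact hF0

end

theorem decomp {G : Type} [Group G] (u v z : G) (T : Set G) :
    u • (T ∪ z • T) ∩ v • (T ∪ z • T) =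
      ((u • T ∩ v • T) ∪ (u • T ∩ (v * z) • T)) ∪
      (((u * z) • T ∩ v • T) ∪ ((u * z) • T ∩ (v * z) • T)) := by
  rw [Set.smul_set_union, Set.smul_set_union, smul_smul, smul_smul]
  ext g; simp only [Set.mem_inter_iff, Set.mem_union]; tauto

theorem tau_union {G : Type} [Group G] {K : Subgroup G} {F : Set (Set G)}
    (hli : LeftInvariant F) (hlo : Lower F)
    (hadd : ∀ A B : Set G, A ∈ F → B ∈ F → A ∪ B ∈ F) (hF0 : ∅ ∈ F)
    {z : G} (hzK : z ∉ K) (hzc : ∀ x ∈ K, z * x = x * z) (hz2 : z * z ∉ K)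
    (γ : Ordinal) :
    ∀ {T : Set G}, T ⊆ (K : Set G) → T ∈ tauIter F γ →
      T ∪ z • T ∈ tauIter F (γ + 1) := by
  have e4 : ∀ w : G, z⁻¹ * w * z ∈ K → w ∈ K := by
    intro w h
    have h1 := hzc _ h
    have h3 : w * z = (z⁻¹ * w * z) * z := by rw [← h1]; group
    have h4 : w = z⁻¹ * w * z := mul_right_cancel h3
    rwa [← h4] at h
  have e12 : ∀ w : G, w ∈ K → w * z ∈ K → False := by
    intro w h1 h2
    have := K.mul_mem (K.inv_mem h1) h2
    rw [inv_mul_cancel_left] at this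
    exact hzK this
  have e13 : ∀ w : G, w ∈ K → z⁻¹ * w ∈ K → False := by
    intro w h1 h2
    have := K.mul_mem h2 (K.inv_mem h1)
    rw [mul_inv_cancel_right] at this
    exact hzK (by simpa using K.inv_mem this)
  have e23 : ∀ w : G, w * z ∈ K → z⁻¹ * w ∈ K → False := by
    intro w h2 h3
    have hbz : (z⁻¹ * w) * z = w := by rw [← hzc _ h3]; group
    have ha : (z⁻¹ * w) * (z * z) = w * z := by rw [← mul_assoc, hbz]
    have hzz : z * z = (z⁻¹ * w)⁻¹ * (w * z) := by rw [← ha, inv_mul_cancel_left]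
    exact hz2 (by rw [hzz]; exact K.mul_mem (K.inv_mem h3) h2)
  induction γ using Ordinal.induction with
  | _ γ IH =>
  intro T hTK hT
  have h01 : (0 : Ordinal) < γ + 1 := lt_of_lt_of_le zero_lt_one le_add_self
  have hlt : γ < γ + 1 := by rw [Ordinal.add_one_eq_succ]; exact Order.lt_succ γ
  rw [mem_tauIter_pos h01.ne']
  intro u v huv
  set w := u⁻¹ * v with hw
  have c2 : u⁻¹ * (v * z) = w * z := by rw [hw]; group
  have c3 : (u * z)⁻¹ * v = z⁻¹ * w := by rw [hw]; group
  have c4 : (u * z)⁻¹ * (v * z) = z⁻¹ * w * z := by rw [hw]; group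
  have hdec := decomp u v z T
  by_cases h1 : w ∈ K
  · have hw1 : w ≠ 1 := fun h => huv (inv_mul_eq_one.mp (hw.symm.trans h))
    have hE2 : u • T ∩ (v * z) • T = ∅ :=
      smul_inter_eq_empty hTK (by rw [c2]; exact fun h => e12 w h1 h)
    have hE3 : (u * z) • T ∩ v • T = ∅ :=
      smul_inter_eq_empty hTK (by rw [c3]; exact fun h => e13 w h1 h)
    have hzw : z⁻¹ * w * z = w := by rw [mul_assoc, ← hzc w h1]; group
    have hT1 : u • T ∩ v • T = u • (T ∩ w • T) := by rw [smul_inter_smul, ← hw]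
    have hT4 : (u * z) • T ∩ (v * z) • T = (u * z) • (T ∩ w • T) := by
      rw [smul_inter_smul, c4, hzw]
    rcases eq_or_ne γ 0 with rfl | hγ
    · rw [tauIter_zero] at hT
      refine ⟨0, hlt, ?_⟩
      rw [tauIter_zero]
      apply hlo _ (u • T ∪ (u * z) • T) ?_ (hadd _ _ (hli T hT u) (hli T hT (u * z)))
      rw [hdec, hE2, hE3]
      simp only [Set.union_empty, Set.empty_union]
      exact Set.union_subset_union Set.inter_subset_left Set.inter_subset_left
    · rw [mem_tauIter_pos hγ] at hT
      obtain ⟨δ, hδ, hS⟩ := hT 1 w (fun h => hw1 h.symm)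
      rw [one_smul] at hS
      have hU := IH δ hδ (fun g hg => hTK hg.1) hS
      have hUu := tauIter_smul hli hU u
      rw [Set.smul_set_union, smul_smul] at hUu
      refine ⟨δ + 1, ?_, ?_⟩
      · rw [Ordinal.add_one_eq_succ, Ordinal.add_one_eq_succ]
        exact Order.succ_lt_succ hδ
      · apply tauIter_lower hlo _ ?_ hUu
        rw [hdec, hE2, hE3, hT1, hT4]
        simp only [Set.union_empty, Set.empty_union]
        exact subset_rfl
  · by_cases h2 : w * z ∈ K
    · have hE1 : u • T ∩ v • T = ∅ :=
        smul_inter_eq_empty hTK (by rw [← hw]; exact h1)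
      have hE3 : (u * z) • T ∩ v • T = ∅ :=
        smul_inter_eq_empty hTK (by rw [c3]; exact fun h => e23 w h2 h)
      have hE4 : (u * z) • T ∩ (v * z) • T = ∅ :=
        smul_inter_eq_empty hTK (by rw [c4]; exact fun h => h1 (e4 w h))
      refine ⟨γ, hlt, ?_⟩
      apply tauIter_lower hlo _ ?_ (tauIter_smul hli hT u)
      rw [hdec, hE1, hE3, hE4]
      simp only [Set.union_empty, Set.empty_union]
      exact Set.inter_subset_left
    · by_cases h3 : z⁻¹ * w ∈ K
      · have hE1 : u • T ∩ v • T = ∅ :=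
          smul_inter_eq_empty hTK (by rw [← hw]; exact h1)
        have hE2 : u • T ∩ (v * z) • T = ∅ :=
          smul_inter_eq_empty hTK (by rw [c2]; exact h2)
        have hE4 : (u * z) • T ∩ (v * z) • T = ∅ :=
          smul_inter_eq_empty hTK (by rw [c4]; exact fun h => h1 (e4 w h))
        refine ⟨γ, hlt, ?_⟩
        apply tauIter_lower hlo _ ?_ (tauIter_smul hli hT (u * z))
        rw [hdec, hE1, hE2, hE4]
        simp only [Set.union_empty, Set.empty_union]
        exact Set.inter_subset_left
      · have hE1 : u • T ∩ v • T = ∅ :=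
          smul_inter_eq_empty hTK (by rw [← hw]; exact h1)
        have hE2 : u • T ∩ (v * z) • T = ∅ :=
          smul_inter_eq_empty hTK (by rw [c2]; exact h2)
        have hE3 : (u * z) • T ∩ v • T = ∅ :=
          smul_inter_eq_empty hTK (by rw [c3]; exact h3)
        have hE4 : (u * z) • T ∩ (v * z) • T = ∅ :=
          smul_inter_eq_empty hTK (by rw [c4]; exact fun h => h1 (e4 w h))
        refine ⟨0, h01, ?_⟩
        rw [tauIter_zero, hdec, hE1, hE2, hE3, hE4]
        simpa using hF0

theorem stmt_12 {G : Type} [Group G] {H K : Subgroup G} (hKH : K ≤ H) (e : H ≃* K)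
    (z : G) (hzH : z ∈ H) (hzc : ∀ x ∈ K, z * x = x * z) (hz2 : z ^ 2 ∉ K)
    (F : Set (Set G)) (hli : LeftInvariant F) (hlo : Lower F)
    (hadd : ∀ A B : Set G, A ∈ F → B ∈ F → A ∪ B ∈ F) (hinv : HInv e F)
    (α : Ordinal) (A : Set G) (hA : A ⊆ (H : Set G)) (hAα : A ∈ tauIter F α) :
    hImg e A ∪ z • hImg e A ∈ tauIter F (α + 1) := by
  have hz2' : z * z ∉ K := by rwa [pow_two] at hz2
  have hzK : z ∉ K := fun h => hz2' (K.mul_mem h h)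
  by_cases hne : ∃ x y : G, x ≠ y
  · obtain ⟨x, y, hxy⟩ := hne
    have hF0 : ∅ ∈ F := by
      have hFne : ∀ β : Ordinal, ∀ B : Set G, B ∈ tauIter F β → F.Nonempty := by
        intro β
        induction β using Ordinal.induction with
        | _ β IH =>
          intro B hB
          rcases eq_or_ne β 0 with rfl | hβ
          · rw [tauIter_zero] at hB; exact ⟨B, hB⟩
          · rw [mem_tauIter_pos hβ] at hB
            obtain ⟨δ, hδ, h⟩ := hB x y hxy
            exact IH δ hδ _ h
      obtain ⟨C, hC⟩ := hFne α A hAα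
      exact hlo ∅ C (Set.empty_subset C) hC
    exact tau_union hli hlo hadd hF0 hzK hzc hz2' α (hImg_subset e A)
      (tauIter_hImg e hli hlo hinv hF0 α hA hAα)
  · push_neg at hne
    have h01 : (0 : Ordinal) < α + 1 := lt_of_lt_of_le zero_lt_one le_add_self
    rw [mem_tauIter_pos h01.ne']
    intro x y hxy
    exact absurd (hne x y) hxy
end

section
/- Let G be a countable group and F ⊆ P(G) a Borel left-invariant lower family of subsets of G. Then the thin-completion τ*(F), viewed as a subset of the Cantor space 2^G, is coanalytic; and for each countable ordinal α, τ^α(F) is Borel in 2^G. -/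
open Pointwise

/-- `tauOp F = τ(F)` is the family of `F`-thin sets. -/
def tauOp {G : Type} [Group G] (F : Set (Set G)) : Set (Set G) :=
  {A | ∀ x y : G, x ≠ y → x • A ∩ y • A ∈ F}

/-- A family is thin-complete if `τ(F) = F`. -/
def ThinComplete {G : Type} [Group G] (F : Set (Set G)) : Prop := tauOp F = F

/-- The thin-completion `τ*(F)`: the smallest thin-complete family containing `F`;
it equals `τ^{<ω₁}(F)` for countable `G`. -/
def tauStar {G : Type} [Group G] (F : Set (Set G)) : Set (Set G) :=
  ⋂₀ {T : Set (Set G) | F ⊆ T ∧ ThinComplete T}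

section Aux
variable {G : Type} [Group G]

/-- The inductive closure of `F` under the operation `A ↦ x • A ∩ y • A`:
`TGood F A` holds iff `A` belongs to every thin-complete family containing `F`. -/
inductive TGood (F : Set (Set G)) : Set G → Prop
  | base {A} : A ∈ F → TGood F A
  | step {A} : (∀ x y : G, x ≠ y → TGood F (x • A ∩ y • A)) → TGood F A

lemma tauStar_eq_good (F : Set (Set G)) (hli : LeftInvariant F) (hlo : Lower F) :
    tauStar F = {A | TGood F A} := by
  apply subset_antisymm
  · intro A hA
    have h1 : F ⊆ {A : Set G | TGood F A} := fun B hB => TGood.base hB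
    have h2 : ThinComplete {A : Set G | TGood F A} := by
      apply Set.Subset.antisymm
      · intro B hB; exact TGood.step hB
      · intro B hB x y hxy
        cases hB with
        | base h => exact TGood.base (hlo _ _ Set.inter_subset_left (hli B h x))
        | step h => exact h x y hxy
    exact hA _ ⟨h1, h2⟩
  · intro A hA
    induction hA with
    | base h => exact fun T hT => hT.1 h
    | step h ih => intro T hT; rw [← hT.2]; exact fun x y hxy => ih x y hxy T hT

/-- The iterated intersections along a branch of distinct pairs. -/
def chain (A : Set G) (b : ℕ → {p : G × G // p.1 ≠ p.2}) : ℕ → Set G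
  | 0 => A
  | n + 1 => (b n).1.1 • chain A b n ∩ (b n).1.2 • chain A b n

lemma chain_shift (A : Set G) (b : ℕ → {p : G × G // p.1 ≠ p.2}) (n : ℕ) :
    chain A b (n + 1) = chain ((b 0).1.1 • A ∩ (b 0).1.2 • A) (fun k => b (k + 1)) n := by
  induction n with
  | zero => rfl
  | succ n ih => show _ • chain A b (n+1) ∩ _ • chain A b (n+1) = _; rw [ih]; rfl

lemma not_good_iff (F : Set (Set G)) (A : Set G) :
    ¬ TGood F A ↔ ∃ b : ℕ → {p : G × G // p.1 ≠ p.2}, ∀ n, chain A b n ∉ F := by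
  constructor
  · intro hA
    have key : ∀ B : {B : Set G // ¬ TGood F B},
        ∃ p : {p : G × G // p.1 ≠ p.2}, ¬ TGood F (p.1.1 • B.1 ∩ p.1.2 • B.1) := by
      rintro ⟨B, hB⟩
      by_contra h
      push_neg at h
      exact hB (TGood.step fun x y hxy => h ⟨(x, y), hxy⟩)
    choose pick hpick using key
    let f : ℕ → {B : Set G // ¬ TGood F B} := fun n =>
      Nat.rec ⟨A, hA⟩ (fun _ prev => ⟨_, hpick prev⟩) n
    refine ⟨fun n => pick (f n), fun n => ?_⟩
    have hchain : ∀ n, chain A (fun n => pick (f n)) n = (f n).1 := by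
      intro n
      induction n with
      | zero => rfl
      | succ n ih => show _ • chain A _ n ∩ _ • chain A _ n = _; rw [ih]
    rw [hchain n]
    exact fun hmem => (f n).2 (TGood.base hmem)
  · rintro ⟨b, hb⟩ hA
    induction hA generalizing b with
    | base h => exact hb 0 h
    | step h ih =>
      exact ih (b 0).1.1 (b 0).1.2 (b 0).2 (fun k => b (k + 1))
        (fun n => by rw [← chain_shift]; exact hb (n + 1))

lemma tauIter_unfold (F : Set (Set G)) (α : Ordinal) :
    tauIter F α = if α = 0 then F
      else {A | ∀ x y : G, x ≠ y → ∃ β, ∃ _ : β < α, x • A ∩ y • A ∈ tauIter F β} :=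
  WellFounded.fix_eq _ _ _

/-- One step of the intersection operation, at the level of characteristic functions. -/
def stepFn (x y : G) (χ : G → Bool) : G → Bool :=
  fun g => χ (x⁻¹ * g) && χ (y⁻¹ * g)

lemma stepFn_spec (x y : G) (χ : G → Bool) :
    {g | stepFn x y χ g = true} = x • {g | χ g = true} ∩ y • {g | χ g = true} := by
  ext g
  simp [stepFn, Set.mem_smul_set_iff_inv_smul_mem, smul_eq_mul, Bool.and_eq_true]

lemma stepFn_cont (x y : G) : Continuous (stepFn x y) := by
  apply continuous_pi
  intro g
  have hco : Continuous (fun q : Bool × Bool => q.1 && q.2) :=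
    continuous_of_discreteTopology
  have h1 : Continuous (fun χ : G → Bool => (χ (x⁻¹ * g), χ (y⁻¹ * g))) :=
    (continuous_apply _).prodMk (continuous_apply _)
  exact hco.comp h1

/-- Iterated intersections along a branch, at the level of characteristic functions. -/
def iterFn (z : (ℕ → {p : G × G // p.1 ≠ p.2}) × (G → Bool)) : ℕ → (G → Bool)
  | 0 => z.2
  | n + 1 => stepFn (z.1 n).1.1 (z.1 n).1.2 (iterFn z n)

lemma iterFn_spec (b : ℕ → {p : G × G // p.1 ≠ p.2}) (χ : G → Bool) (n : ℕ) :
    {g | iterFn (b, χ) n g = true} = chain {g | χ g = true} b n := by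
  induction n with
  | zero => rfl
  | succ n ih =>
    show {g | stepFn _ _ (iterFn (b, χ) n) g = true} = _
    rw [stepFn_spec, ih]
    rfl
end Aux

theorem stmt_19 {G : Type} [Group G] [Countable G] (F : Set (Set G))
    (hli : LeftInvariant F) (hlo : Lower F)
    (hB : @MeasurableSet (G → Bool) (borel _) {χ : G → Bool | {g | χ g = true} ∈ F}) :
    (∀ α : Ordinal, α.card ≤ Cardinal.aleph0 →
      @MeasurableSet (G → Bool) (borel _)
        {χ : G → Bool | {g | χ g = true} ∈ tauIter F α}) ∧
    MeasureTheory.AnalyticSet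
      ({χ : G → Bool | {g | χ g = true} ∈ tauStar F}ᶜ) := by
  haveI : BorelSpace (G → Bool) := Pi.borelSpace
  have hbor : (inferInstance : MeasurableSpace (G → Bool)) = borel (G → Bool) :=
    BorelSpace.measurable_eq
  rw [← hbor] at hB
  constructor
  · -- Borel-ness of each iterate
    rw [← hbor]
    intro α
    induction α using Ordinal.induction with
    | h α ih =>
      intro hcard
      by_cases hα : α = 0
      · subst hα
        convert hB using 2
        rw [tauIter_unfold, if_pos rfl]
      · have hset : {χ : G → Bool | {g | χ g = true} ∈ tauIter F α}
            = ⋂ (p : G × G), ⋂ (_ : p.1 ≠ p.2), ⋃ (β : Set.Iio α),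
              stepFn p.1 p.2 ⁻¹' {χ : G → Bool | {g | χ g = true} ∈ tauIter F β.1} := by
          ext χ
          simp only [Set.mem_setOf_eq, Set.mem_iInter, Set.mem_iUnion, Set.mem_preimage,
            stepFn_spec]
          rw [tauIter_unfold, if_neg hα]
          constructor
          · intro h p hp
            obtain ⟨β, hβ, hmem⟩ := h p.1 p.2 hp
            exact ⟨⟨β, hβ⟩, hmem⟩
          · intro h x y hxy
            obtain ⟨⟨β, hβ⟩, hmem⟩ := h (x, y) hxy
            exact ⟨β, hβ, hmem⟩
        rw [hset]
        haveI : Countable (Set.Iio α) := by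
          rw [← Cardinal.mk_le_aleph0_iff, Ordinal.mk_Iio_ordinal]
          simpa using Cardinal.lift_le.2 hcard
        refine MeasurableSet.iInter fun p => MeasurableSet.iInter fun hp =>
          MeasurableSet.iUnion fun β => ?_
        exact (stepFn_cont p.1 p.2).measurable (ih β.1 β.2 (le_trans
          (Ordinal.card_le_card β.2.le) hcard))
  · -- coanalyticity of the thin-completion
    letI : TopologicalSpace {p : G × G // p.1 ≠ p.2} := ⊥
    haveI : DiscreteTopology {p : G × G // p.1 ≠ p.2} := ⟨rfl⟩
    haveI : TopologicalSpace.SeparableSpace {p : G × G // p.1 ≠ p.2} :=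
      TopologicalSpace.separableSpace_iff_countable.2 inferInstance
    letI : MeasurableSpace {p : G × G // p.1 ≠ p.2} := ⊤
    haveI : MeasurableSingletonClass {p : G × G // p.1 ≠ p.2} :=
      ⟨fun _ => MeasurableSpace.measurableSet_top⟩
    haveI : BorelSpace {p : G × G // p.1 ≠ p.2} := ⟨borel_eq_top_of_discrete.symm⟩
    haveI : BorelSpace (ℕ → {p : G × G // p.1 ≠ p.2}) := Pi.borelSpace
    haveI : PolishSpace (G → Bool) := {}
    haveI : PolishSpace (ℕ → {p : G × G // p.1 ≠ p.2}) := {}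
    -- the Borel set whose projection is the complement
    set E : Set ((ℕ → {p : G × G // p.1 ≠ p.2}) × (G → Bool)) :=
      ⋂ n, (fun z => iterFn z n) ⁻¹' {χ : G → Bool | {g | χ g = true} ∈ F}ᶜ with hEdef
    have hmeas : ∀ n : ℕ,
        Measurable (fun z : (ℕ → {p : G × G // p.1 ≠ p.2}) × (G → Bool) => iterFn z n) := by
      intro n
      induction n with
      | zero => exact measurable_snd
      | succ n ih =>
        have houter : Measurable (fun q : (G → Bool) × {p : G × G // p.1 ≠ p.2} =>
            stepFn q.2.1.1 q.2.1.2 q.1) :=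
          measurable_from_prod_countable_left fun p => (stepFn_cont p.1.1 p.1.2).measurable
        have hinner : Measurable (fun z : (ℕ → {p : G × G // p.1 ≠ p.2}) × (G → Bool) =>
            ((iterFn z n, z.1 n) : (G → Bool) × {p : G × G // p.1 ≠ p.2})) :=
          ih.prodMk ((measurable_pi_apply n).comp measurable_fst)
        exact houter.comp hinner
    have hE : MeasurableSet E :=
      MeasurableSet.iInter fun n => (hmeas n) hB.compl
    have hanal : MeasureTheory.AnalyticSet (Prod.snd '' E) :=
      hE.analyticSet.image_of_continuous continuous_snd
    have himg : Prod.snd '' E = {χ : G → Bool | {g | χ g = true} ∈ tauStar F}ᶜ := by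
      ext χ
      rw [Set.mem_compl_iff, Set.mem_setOf_eq, tauStar_eq_good F hli hlo, Set.mem_setOf_eq,
        not_good_iff]
      constructor
      · rintro ⟨⟨b, χ'⟩, hz, rfl⟩
        refine ⟨b, fun n => ?_⟩
        have := Set.mem_iInter.1 hz n
        rw [Set.mem_preimage, Set.mem_compl_iff, Set.mem_setOf_eq] at this
        rwa [← iterFn_spec]
      · rintro ⟨b, hb⟩
        refine ⟨(b, χ), Set.mem_iInter.2 fun n => ?_, rfl⟩
        rw [Set.mem_preimage, Set.mem_compl_iff, Set.mem_setOf_eq, iterFn_spec]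
        exact hb n
    rwa [himg] at hanal
end
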